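/- arXiv:2005.05888 — 5 statements merged into one kernel-verified Lean document; each statement's English description precedes it below -/
import Mathlib

section
/- Let n, m be positive integers, M ∈ ℝ^{n×n}, and let P, Q ∈ ℝ^{n×n} be symmetric positive definite with MᵀPM − P ⪯ −Q and satisfying the gain condition 4·p̄⋆²·Lφ²·λmax(P) + 8·p̄⋆·Lφ·‖PM‖_F ≤ λmin(Q). Let ψ̃ : ℝⁿ → ℝᵐ satisfy ‖ψ̃(x)‖ ≤ φ̄ and ‖ψ̃(x′) − ψ̃(x)‖ ≤ Lφ·‖x′ − x‖ for all x, x′ ∈ ℝⁿ, and let p⋆, p ∈ ℝ^{m×n} with operator norm ‖p⋆‖ ≤ p̄⋆; set eᵖ := p − p⋆. Let x, e ∈ ℝⁿ and define e⁺ := M e + pᵀψ̃(x + e) − p⋆ᵀψ̃(x). If ‖eᵖ‖ ≤ (λmin(Q) / (8·φ̄·(λmax(P)·Lφ·p̄⋆ + ‖PM‖_F)))·‖e‖, then (e⁺)ᵀP e⁺ − eᵀP e ≤ −(λmin(Q)/2)·‖e‖² + φ̄²·λmax(P)·‖eᵖ‖². -/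
open Matrix MeasureTheory Filter

noncomputable def lamMin {n : ℕ} (A : Matrix (Fin n) (Fin n) ℝ) : ℝ :=
  sInf (spectrum ℝ A)

noncomputable def lamMax {n : ℕ} (A : Matrix (Fin n) (Fin n) ℝ) : ℝ :=
  sSup (spectrum ℝ A)

noncomputable def frobNorm {m n : ℕ} (M : Matrix (Fin m) (Fin n) ℝ) : ℝ :=
  Real.sqrt (∑ i, ∑ j, (M i j) ^ 2)

noncomputable def mulVecE {m n : ℕ} (M : Matrix (Fin m) (Fin n) ℝ)
    (x : EuclideanSpace ℝ (Fin n)) : EuclideanSpace ℝ (Fin m) :=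
  Matrix.toEuclideanLin M x

noncomputable def quadForm {n : ℕ} (P : Matrix (Fin n) (Fin n) ℝ)
    (x : EuclideanSpace ℝ (Fin n)) : ℝ :=
  inner ℝ x (mulVecE P x)

noncomputable def opNorm {m n : ℕ} (p : Matrix (Fin m) (Fin n) ℝ) : ℝ :=
  ‖LinearMap.toContinuousLinearMap (Matrix.toEuclideanLin p)‖

section Helpers

open scoped RealInnerProductSpace

lemma mulVecE_apply {k l : ℕ} (A : Matrix (Fin k) (Fin l) ℝ) (x : EuclideanSpace ℝ (Fin l))
    (i : Fin k) : mulVecE A x i = A.mulVec x i := rfl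

lemma inner_euc {k : ℕ} (u v : EuclideanSpace ℝ (Fin k)) : ⟪u, v⟫ = ∑ i, u i * v i := by
  simp [PiLp.inner_apply, RCLike.inner_apply, conj_trivial, mul_comm]

lemma inner_transpose {k l : ℕ} (A : Matrix (Fin k) (Fin l) ℝ) (u : EuclideanSpace ℝ (Fin k))
    (v : EuclideanSpace ℝ (Fin l)) : ⟪mulVecE Aᵀ u, v⟫ = ⟪u, mulVecE A v⟫ := by
  simp only [inner_euc, mulVecE_apply, Matrix.mulVec, dotProduct,
    Matrix.transpose_apply]
  simp_rw [Finset.sum_mul, Finset.mul_sum]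
  rw [Finset.sum_comm]
  exact Finset.sum_congr rfl fun j _ => Finset.sum_congr rfl fun i _ => by ring

lemma norm_mulVecE_le {k l : ℕ} (A : Matrix (Fin k) (Fin l) ℝ) (x : EuclideanSpace ℝ (Fin l)) :
    ‖mulVecE A x‖ ≤ opNorm A * ‖x‖ := by
  simpa [mulVecE, opNorm] using
    (LinearMap.toContinuousLinearMap (Matrix.toEuclideanLin A)).le_opNorm x

lemma norm_mulVecE_transpose_le {k l : ℕ} (A : Matrix (Fin k) (Fin l) ℝ)
    (u : EuclideanSpace ℝ (Fin k)) : ‖mulVecE Aᵀ u‖ ≤ opNorm A * ‖u‖ := by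
  rcases eq_or_lt_of_le (norm_nonneg (mulVecE Aᵀ u)) with h | h
  · rw [← h]
    have h0 : (0:ℝ) ≤ opNorm A := norm_nonneg _
    positivity
  · have h1 : ‖mulVecE Aᵀ u‖ ^ 2 = ⟪u, mulVecE A (mulVecE Aᵀ u)⟫ := by
      rw [← inner_transpose, real_inner_self_eq_norm_sq]
    have h2 : ⟪u, mulVecE A (mulVecE Aᵀ u)⟫ ≤ ‖u‖ * (opNorm A * ‖mulVecE Aᵀ u‖) :=
      (real_inner_le_norm _ _).trans
        (mul_le_mul_of_nonneg_left (norm_mulVecE_le _ _) (norm_nonneg u))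
    nlinarith [h]

lemma norm_mulVecE_frob_le {k l : ℕ} (A : Matrix (Fin k) (Fin l) ℝ)
    (x : EuclideanSpace ℝ (Fin l)) : ‖mulVecE A x‖ ≤ frobNorm A * ‖x‖ := by
  have hF : (0:ℝ) ≤ frobNorm A := Real.sqrt_nonneg _
  have hx2 : ‖x‖ ^ 2 = ∑ j, x j ^ 2 := by
    rw [← real_inner_self_eq_norm_sq, inner_euc]
    exact Finset.sum_congr rfl fun j _ => (sq (x j)).symm
  have hF2 : frobNorm A ^ 2 = ∑ i, ∑ j, A i j ^ 2 := by
    rw [frobNorm, Real.sq_sqrt]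
    positivity
  have h1 : ‖mulVecE A x‖ ^ 2 = ∑ i, (A.mulVec x i) ^ 2 := by
    rw [← real_inner_self_eq_norm_sq, inner_euc]
    exact Finset.sum_congr rfl fun i _ => (sq _).symm
  have h2 : ∀ i, (A.mulVec x i) ^ 2 ≤ (∑ j, A i j ^ 2) * ∑ j, x j ^ 2 := by
    intro i
    rw [Matrix.mulVec, dotProduct]
    exact Finset.sum_mul_sq_le_sq_mul_sq _ _ _
  have hsq : ‖mulVecE A x‖ ^ 2 ≤ (frobNorm A * ‖x‖) ^ 2 := by
    rw [h1, mul_pow, hF2, hx2, Finset.sum_mul]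
    exact Finset.sum_le_sum fun i _ => h2 i
  nlinarith [norm_nonneg (mulVecE A x), mul_nonneg hF (norm_nonneg x)]

lemma transpose_eq_self_of_hermitian {k : ℕ} {A : Matrix (Fin k) (Fin k) ℝ}
    (hA : A.IsHermitian) : Aᵀ = A := by
  ext i j
  rw [Matrix.transpose_apply]
  conv_rhs => rw [← hA]
  simp [Matrix.conjTranspose_apply]

lemma mulVecE_eigen {k : ℕ} {A : Matrix (Fin k) (Fin k) ℝ} (hA : A.IsHermitian) (i : Fin k) :
    mulVecE A (hA.eigenvectorBasis i) = hA.eigenvalues i • hA.eigenvectorBasis i := by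
  ext j
  exact congrFun (hA.mulVec_eigenvectorBasis i) j

lemma quadForm_eq_sum {k : ℕ} {A : Matrix (Fin k) (Fin k) ℝ} (hA : A.IsHermitian)
    (x : EuclideanSpace ℝ (Fin k)) :
    quadForm A x = ∑ i, hA.eigenvalues i * ⟪hA.eigenvectorBasis i, x⟫ ^ 2 := by
  have h := hA.eigenvectorBasis.sum_inner_mul_inner x (mulVecE A x)
  rw [quadForm, ← h]
  refine Finset.sum_congr rfl fun i _ => ?_
  have h2 : ⟪hA.eigenvectorBasis i, mulVecE A x⟫ =
      hA.eigenvalues i * ⟪hA.eigenvectorBasis i, x⟫ := by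
    have h3 := inner_transpose A (hA.eigenvectorBasis i) x
    rw [transpose_eq_self_of_hermitian hA, mulVecE_eigen hA i, real_inner_smul_left] at h3
    exact h3.symm
  rw [h2, real_inner_comm x (hA.eigenvectorBasis i)]
  ring

lemma norm_sq_eq_sum {k : ℕ} {A : Matrix (Fin k) (Fin k) ℝ} (hA : A.IsHermitian)
    (x : EuclideanSpace ℝ (Fin k)) :
    ‖x‖ ^ 2 = ∑ i, ⟪hA.eigenvectorBasis i, x⟫ ^ 2 := by
  have h := hA.eigenvectorBasis.sum_inner_mul_inner x x
  rw [real_inner_self_eq_norm_sq] at h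
  rw [← h]
  exact Finset.sum_congr rfl fun i _ => by
    rw [real_inner_comm x (hA.eigenvectorBasis i)]; ring

lemma lamMin_le_eig {k : ℕ} {A : Matrix (Fin k) (Fin k) ℝ} (hA : A.IsHermitian) (i : Fin k) :
    lamMin A ≤ hA.eigenvalues i := by
  rw [lamMin, hA.spectrum_real_eq_range_eigenvalues]
  exact csInf_le (Set.finite_range _).bddBelow ⟨i, rfl⟩

lemma eig_le_lamMax {k : ℕ} {A : Matrix (Fin k) (Fin k) ℝ} (hA : A.IsHermitian) (i : Fin k) :
    hA.eigenvalues i ≤ lamMax A := by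
  rw [lamMax, hA.spectrum_real_eq_range_eigenvalues]
  exact le_csSup (Set.finite_range _).bddAbove ⟨i, rfl⟩

lemma lamMin_quad_le {k : ℕ} {A : Matrix (Fin k) (Fin k) ℝ} (hA : A.IsHermitian)
    (x : EuclideanSpace ℝ (Fin k)) : lamMin A * ‖x‖ ^ 2 ≤ quadForm A x := by
  rw [quadForm_eq_sum hA, norm_sq_eq_sum hA, Finset.mul_sum]
  exact Finset.sum_le_sum fun i _ =>
    mul_le_mul_of_nonneg_right (lamMin_le_eig hA i) (sq_nonneg _)

lemma quad_le_lamMax {k : ℕ} {A : Matrix (Fin k) (Fin k) ℝ} (hA : A.IsHermitian)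
    (x : EuclideanSpace ℝ (Fin k)) : quadForm A x ≤ lamMax A * ‖x‖ ^ 2 := by
  rw [quadForm_eq_sum hA, norm_sq_eq_sum hA, Finset.mul_sum]
  exact Finset.sum_le_sum fun i _ =>
    mul_le_mul_of_nonneg_right (eig_le_lamMax hA i) (sq_nonneg _)

lemma lamMax_pos {k : ℕ} (hk : 0 < k) {A : Matrix (Fin k) (Fin k) ℝ} (hA : A.PosDef) :
    0 < lamMax A := by
  have i : Fin k := ⟨0, hk⟩
  exact lt_of_lt_of_le (hA.eigenvalues_pos i) (eig_le_lamMax hA.1 i)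

lemma posSemidef_quad {k : ℕ} {S : Matrix (Fin k) (Fin k) ℝ} (hS : S.PosSemidef)
    (x : EuclideanSpace ℝ (Fin k)) : 0 ≤ quadForm S x := by
  have h := hS.dotProduct_mulVec_nonneg (fun i => x i)
  simpa [quadForm, inner_euc, mulVecE_apply, dotProduct] using h

lemma mulVecE_mul {k l r : ℕ} (A : Matrix (Fin k) (Fin l) ℝ) (B : Matrix (Fin l) (Fin r) ℝ)
    (x : EuclideanSpace ℝ (Fin r)) : mulVecE (A * B) x = mulVecE A (mulVecE B x) := by
  ext i
  simp only [mulVecE_apply, ← Matrix.mulVec_mulVec]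
  rfl

lemma mulVecE_sub_matrix {k l : ℕ} (A B : Matrix (Fin k) (Fin l) ℝ)
    (x : EuclideanSpace ℝ (Fin l)) : mulVecE (A - B) x = mulVecE A x - mulVecE B x := by
  ext i
  simp [mulVecE_apply, Matrix.sub_mulVec]

lemma mulVecE_sub_vec {k l : ℕ} (A : Matrix (Fin k) (Fin l) ℝ)
    (x y : EuclideanSpace ℝ (Fin l)) : mulVecE A (x - y) = mulVecE A x - mulVecE A y := by
  simp [mulVecE, map_sub]

end Helpers

/-- Theorem 1 of the paper (one-step Lyapunov decrease in the conic region). -/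
theorem stmt_0 {n m : ℕ} (hn : 0 < n) (hm : 0 < m)
    (M P Q : Matrix (Fin n) (Fin n) ℝ)
    (phibar Lphi pbar : ℝ)
    (hphibar : 0 < phibar) (hLphi : 0 < Lphi) (hpbar : 0 < pbar)
    (hP : P.PosDef) (hQ : Q.PosDef)
    (hLyap : (P - Mᵀ * P * M - Q).PosSemidef)
    (hgain : 4 * pbar ^ 2 * Lphi ^ 2 * lamMax P + 8 * pbar * Lphi * frobNorm (P * M) ≤ lamMin Q)
    (ψ : EuclideanSpace ℝ (Fin n) → EuclideanSpace ℝ (Fin m))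
    (hbdd : ∀ x, ‖ψ x‖ ≤ phibar)
    (hlip : ∀ x x', ‖ψ x' - ψ x‖ ≤ Lphi * ‖x' - x‖)
    (pstar p : Matrix (Fin m) (Fin n) ℝ)
    (hpstar : opNorm pstar ≤ pbar)
    (x e eplus : EuclideanSpace ℝ (Fin n))
    (heplus : eplus = mulVecE M e + mulVecE pᵀ (ψ (x + e)) - mulVecE pstarᵀ (ψ x))
    (hcone : opNorm (p - pstar) ≤
      (lamMin Q / (8 * phibar * (lamMax P * Lphi * pbar + frobNorm (P * M)))) * ‖e‖) :
    quadForm P eplus - quadForm P e ≤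
      -(lamMin Q / 2) * ‖e‖ ^ 2 + phibar ^ 2 * lamMax P * (opNorm (p - pstar)) ^ 2 := by
  open scoped RealInnerProductSpace in
  -- abbreviations
  set lQ := lamMin Q with hlQ
  set lP := lamMax P with hlP
  set F := frobNorm (P * M) with hF
  set ε := opNorm (p - pstar) with hε
  set E := ‖e‖ with hE
  have hEnn : (0:ℝ) ≤ E := norm_nonneg e
  have hFnn : (0:ℝ) ≤ F := Real.sqrt_nonneg _
  have hεnn : (0:ℝ) ≤ ε := norm_nonneg _
  have hlPpos : 0 < lP := lamMax_pos hn hP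
  -- decomposition of the disturbance
  set u := mulVecE M e with hu
  set d1 := mulVecE (p - pstar)ᵀ (ψ (x + e)) with hd1
  set d2 := mulVecE pstarᵀ (ψ (x + e) - ψ x) with hd2
  set D := d1 + d2 with hD
  have heplus' : eplus = u + D := by
    rw [heplus, hD, hd1, hd2, Matrix.transpose_sub, mulVecE_sub_matrix, mulVecE_sub_vec]
    abel
  -- norm bounds on the disturbance pieces
  have ha : ‖d1‖ ≤ ε * phibar := by
    refine (norm_mulVecE_transpose_le _ _).trans ?_
    exact mul_le_mul_of_nonneg_left (hbdd _) hεnn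
  have hb : ‖d2‖ ≤ pbar * (Lphi * E) := by
    refine (norm_mulVecE_transpose_le _ _).trans ?_
    have h1 : ‖ψ (x + e) - ψ x‖ ≤ Lphi * E := by
      have := hlip x (x + e)
      rwa [add_sub_cancel_left] at this
    exact mul_le_mul hpstar h1 (norm_nonneg _) (le_of_lt hpbar)
  have hDnorm : ‖D‖ ≤ ε * phibar + pbar * (Lphi * E) :=
    (norm_add_le d1 d2).trans (add_le_add ha hb)
  -- quadratic form expansion
  have hPsymm : Pᵀ = P := transpose_eq_self_of_hermitian hP.1
  have hPu : mulVecE P u = mulVecE (P * M) e := (mulVecE_mul P M e).symm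
  have hadd : mulVecE P (u + D) = mulVecE P u + mulVecE P D := by
    simp [mulVecE, map_add]
  have hsymPD : (⟪u, mulVecE P D⟫ : ℝ) = ⟪D, mulVecE P u⟫ := by
    calc (⟪u, mulVecE P D⟫ : ℝ) = ⟪mulVecE Pᵀ u, D⟫ := (inner_transpose P u D).symm
      _ = ⟪D, mulVecE P u⟫ := by rw [hPsymm, real_inner_comm]
  have hexp : quadForm P eplus =
      quadForm P u + 2 * ⟪D, mulVecE (P * M) e⟫ + quadForm P D := by
    rw [heplus']
    rw [show quadForm P (u + D) = ⟪u + D, mulVecE P (u + D)⟫ from rfl, hadd,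
      inner_add_left, inner_add_right, inner_add_right, hsymPD,
      show (⟪u, mulVecE P u⟫ : ℝ) = quadForm P u from rfl,
      show (⟪D, mulVecE P D⟫ : ℝ) = quadForm P D from rfl, hPu]
    ring
  -- Lyapunov decrease of the linear part
  have hquadu : quadForm P u = quadForm (Mᵀ * P * M) e := by
    have h4 : mulVecE (Mᵀ * P * M) e = mulVecE Mᵀ (mulVecE (P * M) e) := by
      rw [mul_assoc]; exact mulVecE_mul _ _ _
    have h5 := inner_transpose M (mulVecE (P * M) e) e
    calc quadForm P u = ⟪mulVecE (P * M) e, u⟫ := by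
          rw [show quadForm P u = ⟪u, mulVecE P u⟫ from rfl, hPu, real_inner_comm]
      _ = ⟪mulVecE Mᵀ (mulVecE (P * M) e), e⟫ := h5.symm
      _ = ⟪e, mulVecE (Mᵀ * P * M) e⟫ := by rw [h4, real_inner_comm]
      _ = quadForm (Mᵀ * P * M) e := rfl
  have hLyap' : quadForm P u ≤ quadForm P e - lQ * E ^ 2 := by
    have h0 := posSemidef_quad hLyap e
    have h1 : quadForm (P - Mᵀ * P * M - Q) e =
        quadForm P e - quadForm (Mᵀ * P * M) e - quadForm Q e := by
      rw [quadForm, quadForm, quadForm, quadForm, mulVecE_sub_matrix, mulVecE_sub_matrix,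
        inner_sub_right, inner_sub_right]
    have h2 : lQ * E ^ 2 ≤ quadForm Q e := lamMin_quad_le hQ.1 e
    rw [h1] at h0
    rw [hquadu]
    linarith
  -- cross term
  have hcross : ⟪D, mulVecE (P * M) e⟫ ≤ ‖D‖ * (F * E) :=
    (real_inner_le_norm _ _).trans
      (mul_le_mul_of_nonneg_left (norm_mulVecE_frob_le _ _) (norm_nonneg _))
  -- quadratic term
  have hquadD : quadForm P D ≤ lP * ‖D‖ ^ 2 := quad_le_lamMax hP.1 D
  -- cone condition rearranged
  have hcone' : 8 * (lP * Lphi * pbar + F) * (phibar * ε) ≤ lQ * E := by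
    have hden : (0:ℝ) < 8 * phibar * (lP * Lphi * pbar + F) := by positivity
    have h1 := mul_le_mul_of_nonneg_left hcone (le_of_lt hden)
    calc 8 * (lP * Lphi * pbar + F) * (phibar * ε)
        = 8 * phibar * (lP * Lphi * pbar + F) * ε := by ring
      _ ≤ 8 * phibar * (lP * Lphi * pbar + F) * (lQ / (8 * phibar * (lP * Lphi * pbar + F)) * E) :=
          h1
      _ = lQ * E := by field_simp
  have hconeE : 8 * (lP * Lphi * pbar + F) * (phibar * ε) * E ≤ lQ * E ^ 2 := by
    have h := mul_le_mul_of_nonneg_right hcone' hEnn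
    have h2 : lQ * E * E = lQ * E ^ 2 := by ring
    linarith
  have hgainE2 : (4 * pbar ^ 2 * Lphi ^ 2 * lP + 8 * pbar * Lphi * F) * E ^ 2 ≤ lQ * E ^ 2 :=
    mul_le_mul_of_nonneg_right hgain (sq_nonneg E)
  -- assemble
  have hDnn : (0:ℝ) ≤ ‖D‖ := norm_nonneg _
  have h2tFE : (⟪D, mulVecE (P * M) e⟫ : ℝ) ≤ (ε * phibar + pbar * (Lphi * E)) * (F * E) :=
    hcross.trans (mul_le_mul_of_nonneg_right hDnorm (mul_nonneg hFnn hEnn))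
  have hquadD' : quadForm P D ≤ lP * (ε * phibar + pbar * (Lphi * E)) ^ 2 :=
    hquadD.trans (mul_le_mul_of_nonneg_left (pow_le_pow_left₀ hDnn hDnorm 2) (le_of_lt hlPpos))
  have expand : 2 * ((ε * phibar + pbar * (Lphi * E)) * (F * E)) +
      lP * (ε * phibar + pbar * (Lphi * E)) ^ 2 - phibar ^ 2 * lP * ε ^ 2 =
      (8 * (lP * Lphi * pbar + F) * (phibar * ε) * E) / 4 +
      ((4 * pbar ^ 2 * Lphi ^ 2 * lP + 8 * pbar * Lphi * F) * E ^ 2) / 4 := by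
    ring
  rw [hexp]
  linarith [hLyap', h2tFE, hquadD', expand, hconeE, hgainE2]
end

section
/- Let n, m be positive integers, M ∈ ℝ^{n×n}, and let P, Q ∈ ℝ^{n×n} be symmetric positive definite with MᵀPM − P ⪯ −Q and 4·p̄⋆²·Lφ²·λmax(P) + 8·p̄⋆·Lφ·‖PM‖_F ≤ λmin(Q). Let ψ̃ : ℝⁿ → ℝᵐ satisfy ‖ψ̃(x)‖ ≤ φ̄ and ‖ψ̃(x′) − ψ̃(x)‖ ≤ Lφ·‖x′ − x‖ for all x, x′ ∈ ℝⁿ, and let p⋆ ∈ ℝ^{m×n} with operator norm ‖p⋆‖ ≤ p̄⋆. Let x : ℕ → ℝⁿ, e : ℕ → ℝⁿ, p : ℕ → ℝ^{m×n} be sequences with e_{t+1} = M e_t + p_tᵀψ̃(x_t + e_t) − p⋆ᵀψ̃(x_t) for all t, and set eᵖ_t := p_t − p⋆. Assume that for every t, ‖eᵖ_t‖ ≤ (λmin(Q) / (8·φ̄·(λmax(P)·Lφ·p̄⋆ + ‖PM‖_F)))·‖e_t‖ and ‖eᵖ_t‖ ≤ ν̄. Then for every t ∈ ℕ: ‖e_t‖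 ≤ √(λmax(P)/λmin(P)) · (1 − λmin(Q)/(2·λmax(P)))^{t/2} · ‖e₀‖ + φ̄·ν̄·√(2·λmax(P)² / (λmin(Q)·λmin(P))). -/
open Matrix MeasureTheory Filter

section helpers
variable {n m k : ℕ}

lemma inner_mulVecE (A : Matrix (Fin m) (Fin n) ℝ)
    (x : EuclideanSpace ℝ (Fin n)) (y : EuclideanSpace ℝ (Fin m)) :
    inner ℝ (mulVecE A x) y = (inner ℝ x (mulVecE Aᵀ y) : ℝ) := by
  simp only [mulVecE, toEuclideanLin_apply, PiLp.inner_apply, RCLike.inner_apply, starRingEnd_apply,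
    star_trivial]
  simp only [PiLp.toLp_apply, mulVec, dotProduct, transpose_apply, Finset.sum_mul,
    Finset.mul_sum]
  rw [Finset.sum_comm]
  congr 1; ext i; congr 1; ext j; ring

lemma mulVecE_comp (A : Matrix (Fin k) (Fin m) ℝ) (B : Matrix (Fin m) (Fin n) ℝ)
    (x : EuclideanSpace ℝ (Fin n)) : mulVecE A (mulVecE B x) = mulVecE (A * B) x := by
  simp only [mulVecE, toEuclideanLin_apply]
  simp [mulVec_mulVec]

lemma mulVecE_sub_mat (A B : Matrix (Fin m) (Fin n) ℝ) (x : EuclideanSpace ℝ (Fin n)) :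
    mulVecE (A - B) x = mulVecE A x - mulVecE B x := by
  simp [mulVecE, map_sub, LinearMap.sub_apply]

lemma mulVecE_sub_vec_s1 (A : Matrix (Fin m) (Fin n) ℝ) (u v : EuclideanSpace ℝ (Fin n)) :
    mulVecE A (u - v) = mulVecE A u - mulVecE A v :=
  map_sub (Matrix.toEuclideanLin A) u v

lemma opNorm_nonneg' (A : Matrix (Fin m) (Fin n) ℝ) : 0 ≤ opNorm A := norm_nonneg _

lemma frobNorm_nonneg (A : Matrix (Fin m) (Fin n) ℝ) : 0 ≤ frobNorm A := Real.sqrt_nonneg _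

lemma norm_mulVecE_le_op (A : Matrix (Fin m) (Fin n) ℝ) (x : EuclideanSpace ℝ (Fin n)) :
    ‖mulVecE A x‖ ≤ opNorm A * ‖x‖ :=
  (LinearMap.toContinuousLinearMap (Matrix.toEuclideanLin A)).le_opNorm x

lemma norm_mulVecE_transpose_le_op (A : Matrix (Fin m) (Fin n) ℝ)
    (y : EuclideanSpace ℝ (Fin m)) : ‖mulVecE Aᵀ y‖ ≤ opNorm A * ‖y‖ := by
  set w := mulVecE Aᵀ y with hw
  rcases eq_or_lt_of_le (norm_nonneg w) with h | h
  · rw [← h]; exact mul_nonneg (opNorm_nonneg' A) (norm_nonneg y)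
  · have h1 : ‖w‖ ^ 2 = inner ℝ w w := (real_inner_self_eq_norm_sq w).symm
    have h2 : (inner ℝ w w : ℝ) = inner ℝ y (mulVecE A w) := by
      conv_lhs => rw [hw]
      rw [inner_mulVecE, transpose_transpose]
    have h3 : (inner ℝ y (mulVecE A w) : ℝ) ≤ ‖y‖ * (opNorm A * ‖w‖) :=
      le_trans (real_inner_le_norm _ _) (by
        have := norm_mulVecE_le_op A w
        nlinarith [norm_nonneg y])
    nlinarith [h1, h2, h3]

lemma norm_mulVecE_le_frob (A : Matrix (Fin m) (Fin n) ℝ) (x : EuclideanSpace ℝ (Fin n)) :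
    ‖mulVecE A x‖ ≤ frobNorm A * ‖x‖ := by
  have hx2 : ‖x‖ ^ 2 = ∑ j, x j ^ 2 := by
    rw [EuclideanSpace.norm_eq]
    rw [Real.sq_sqrt (by positivity)]
    simp [sq_abs]
  have hAx : ‖mulVecE A x‖ ^ 2 ≤ (∑ i, ∑ j, A i j ^ 2) * ‖x‖ ^ 2 := by
    have : ‖mulVecE A x‖ ^ 2 = ∑ i, (∑ j, A i j * x j) ^ 2 := by
      rw [EuclideanSpace.norm_eq, Real.sq_sqrt (by positivity)]
      simp only [mulVecE, toEuclideanLin_apply, PiLp.toLp_apply, mulVec, dotProduct,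
        sq_abs, Real.norm_eq_abs]
    rw [this, hx2, Finset.sum_mul]
    apply Finset.sum_le_sum
    intro i _
    exact Finset.sum_mul_sq_le_sq_mul_sq Finset.univ (fun j => A i j) (fun j => x j)
  have h1 : ‖mulVecE A x‖ ^ 2 ≤ (frobNorm A * ‖x‖) ^ 2 := by
    rw [mul_pow, frobNorm, Real.sq_sqrt (by positivity)]
    exact hAx
  have := Real.sqrt_le_sqrt h1
  rwa [Real.sqrt_sq (norm_nonneg _),
    Real.sqrt_sq (mul_nonneg (frobNorm_nonneg A) (norm_nonneg x))] at this

variable {A : Matrix (Fin n) (Fin n) ℝ}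

lemma toEuclideanLin_eigenBasis (hA : A.IsHermitian) (i : Fin n) :
    mulVecE A (hA.eigenvectorBasis i) = hA.eigenvalues i • hA.eigenvectorBasis i := by
  apply PiLp.ext
  intro j
  simp only [mulVecE, toEuclideanLin_apply, PiLp.toLp_apply, PiLp.smul_apply,
    smul_eq_mul]
  have := congrFun (hA.mulVec_eigenvectorBasis i) j
  simpa using this

lemma quadForm_repr (hA : A.IsHermitian) (x : EuclideanSpace ℝ (Fin n)) :
    quadForm A x = ∑ i, hA.eigenvalues i * (inner ℝ (hA.eigenvectorBasis i) x : ℝ) ^ 2 := by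
  have hsym := (isHermitian_iff_isSymmetric.mp hA)
  have key := (hA.eigenvectorBasis.sum_inner_mul_inner x (mulVecE A x))
  rw [quadForm, ← key]
  apply Finset.sum_congr rfl
  intro i _
  have h1 : (inner ℝ (hA.eigenvectorBasis i) (mulVecE A x) : ℝ)
      = inner ℝ (mulVecE A (hA.eigenvectorBasis i)) x := by
    have := hsym (hA.eigenvectorBasis i) x
    simpa [mulVecE] using this.symm
  rw [h1, toEuclideanLin_eigenBasis hA, real_inner_smul_left, real_inner_comm x]
  ring

lemma norm_sq_repr (hA : A.IsHermitian) (x : EuclideanSpace ℝ (Fin n)) :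
    ‖x‖ ^ 2 = ∑ i, (inner ℝ (hA.eigenvectorBasis i) x : ℝ) ^ 2 := by
  have key := (hA.eigenvectorBasis.sum_inner_mul_inner x x)
  rw [← real_inner_self_eq_norm_sq, ← key]
  apply Finset.sum_congr rfl
  intro i _
  rw [real_inner_comm x]; ring

lemma eigen_le_lamMax (hA : A.IsHermitian) (i : Fin n) : hA.eigenvalues i ≤ lamMax A :=
  le_csSup (Matrix.finite_real_spectrum (A:=A)).bddAbove (hA.eigenvalues_mem_spectrum_real i)

lemma lamMin_le_eigen (hA : A.IsHermitian) (i : Fin n) : lamMin A ≤ hA.eigenvalues i :=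
  csInf_le (Matrix.finite_real_spectrum (A:=A)).bddBelow (hA.eigenvalues_mem_spectrum_real i)

lemma quadForm_le_lamMax (hA : A.IsHermitian) (x : EuclideanSpace ℝ (Fin n)) :
    quadForm A x ≤ lamMax A * ‖x‖ ^ 2 := by
  rw [quadForm_repr hA, norm_sq_repr hA, Finset.mul_sum]
  exact Finset.sum_le_sum fun i _ =>
    mul_le_mul_of_nonneg_right (eigen_le_lamMax hA i) (sq_nonneg _)

lemma lamMin_le_quadForm (hA : A.IsHermitian) (x : EuclideanSpace ℝ (Fin n)) :
    lamMin A * ‖x‖ ^ 2 ≤ quadForm A x := by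
  rw [quadForm_repr hA, norm_sq_repr hA, Finset.mul_sum]
  exact Finset.sum_le_sum fun i _ =>
    mul_le_mul_of_nonneg_right (lamMin_le_eigen hA i) (sq_nonneg _)

lemma lamMin_mem (hn : 0 < n) (hA : A.IsHermitian) : ∃ i, lamMin A = hA.eigenvalues i := by
  have hne : (spectrum ℝ A).Nonempty := ⟨_, hA.eigenvalues_mem_spectrum_real ⟨0, hn⟩⟩
  have h2 : lamMin A ∈ spectrum ℝ A := hne.csInf_mem Matrix.finite_real_spectrum
  rw [hA.spectrum_real_eq_range_eigenvalues] at h2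
  obtain ⟨i, hi⟩ := h2
  exact ⟨i, hi.symm⟩

lemma lamMin_pos (hn : 0 < n) (hA : A.PosDef) : 0 < lamMin A := by
  obtain ⟨i, hi⟩ := lamMin_mem hn hA.1
  rw [hi]; exact hA.eigenvalues_pos i

lemma lamMin_le_lamMax (hn : 0 < n) (hA : A.IsHermitian) : lamMin A ≤ lamMax A := by
  obtain ⟨i, hi⟩ := lamMin_mem hn hA
  rw [hi]; exact eigen_le_lamMax hA i

lemma quadForm_nonneg (hA : A.PosSemidef) (x : EuclideanSpace ℝ (Fin n)) :
    0 ≤ quadForm A x := by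
  have := (posSemidef_iff_dotProduct_mulVec.mp hA).2 (WithLp.ofLp x)
  simpa [quadForm, mulVecE, toEuclideanLin_apply, PiLp.inner_apply, dotProduct,
    PiLp.toLp_apply, mul_comm] using this

lemma quadForm_sub (A B : Matrix (Fin n) (Fin n) ℝ) (x : EuclideanSpace ℝ (Fin n)) :
    quadForm (A - B) x = quadForm A x - quadForm B x := by
  simp [quadForm, mulVecE, map_sub, inner_sub_right]

lemma transpose_eq_of_herm (hA : A.IsHermitian) : Aᵀ = A := by
  ext i j
  conv_rhs => rw [← hA]
  simp [Matrix.conjTranspose_apply]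

lemma quadForm_conj (P M : Matrix (Fin n) (Fin n) ℝ) (x : EuclideanSpace ℝ (Fin n)) :
    quadForm (Mᵀ * P * M) x = quadForm P (mulVecE M x) := by
  rw [quadForm, quadForm, mul_assoc, ← mulVecE_comp, ← inner_mulVecE, mulVecE_comp]

lemma quadForm_add_vec {P : Matrix (Fin n) (Fin n) ℝ} (hP : P.IsHermitian)
    (a d : EuclideanSpace ℝ (Fin n)) :
    quadForm P (a + d) = quadForm P a + 2 * (inner ℝ (mulVecE P a) d : ℝ) + quadForm P d := by
  have hmap : mulVecE P (a + d) = mulVecE P a + mulVecE P d := map_add (Matrix.toEuclideanLin P) a d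
  have hcross : (inner ℝ a (mulVecE P d) : ℝ) = inner ℝ (mulVecE P a) d := by
    rw [real_inner_comm, inner_mulVecE, transpose_eq_of_herm hP, real_inner_comm]
  rw [quadForm, hmap, inner_add_left, inner_add_right, inner_add_right, hcross]
  rw [quadForm, quadForm]
  have : (inner ℝ d (mulVecE P a) : ℝ) = inner ℝ (mulVecE P a) d := real_inner_comm _ _
  rw [this]; ring

lemma sqrt_add_le' (x y : ℝ) (hx : 0 ≤ x) (hy : 0 ≤ y) :
    Real.sqrt (x + y) ≤ Real.sqrt x + Real.sqrt y := by
  rw [← Real.sqrt_sq (add_nonneg (Real.sqrt_nonneg x) (Real.sqrt_nonneg y))]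
  apply Real.sqrt_le_sqrt
  nlinarith [Real.sq_sqrt hx, Real.sq_sqrt hy, Real.sqrt_nonneg x, Real.sqrt_nonneg y]
end helpers

set_option maxHeartbeats 1600000 in
/-- L-ISS conclusion of Theorem 1 in explicit exponential form. -/
theorem stmt_1 {n m : ℕ} (hn : 0 < n) (hm : 0 < m)
    (M P Q : Matrix (Fin n) (Fin n) ℝ)
    (phibar Lphi pbar nubar : ℝ)
    (hphibar : 0 < phibar) (hLphi : 0 < Lphi) (hpbar : 0 < pbar) (hnubar : 0 ≤ nubar)
    (hP : P.PosDef) (hQ : Q.PosDef)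
    (hLyap : (P - Mᵀ * P * M - Q).PosSemidef)
    (hgain : 4 * pbar ^ 2 * Lphi ^ 2 * lamMax P + 8 * pbar * Lphi * frobNorm (P * M) ≤ lamMin Q)
    (ψ : EuclideanSpace ℝ (Fin n) → EuclideanSpace ℝ (Fin m))
    (hbdd : ∀ x, ‖ψ x‖ ≤ phibar)
    (hlip : ∀ x x', ‖ψ x' - ψ x‖ ≤ Lphi * ‖x' - x‖)
    (pstar : Matrix (Fin m) (Fin n) ℝ)
    (hpstar : opNorm pstar ≤ pbar)
    (x e : ℕ → EuclideanSpace ℝ (Fin n))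
    (p : ℕ → Matrix (Fin m) (Fin n) ℝ)
    (hdyn : ∀ t, e (t + 1) =
      mulVecE M (e t) + mulVecE (p t)ᵀ (ψ (x t + e t)) - mulVecE pstarᵀ (ψ (x t)))
    (hcone : ∀ t, opNorm (p t - pstar) ≤
      (lamMin Q / (8 * phibar * (lamMax P * Lphi * pbar + frobNorm (P * M)))) * ‖e t‖)
    (hbound : ∀ t, opNorm (p t - pstar) ≤ nubar) :
    ∀ t : ℕ, ‖e t‖ ≤
      Real.sqrt (lamMax P / lamMin P) * (1 - lamMin Q / (2 * lamMax P)) ^ ((t : ℝ) / 2) * ‖e 0‖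
        + phibar * nubar * Real.sqrt (2 * lamMax P ^ 2 / (lamMin Q * lamMin P)) := by
  have hPsym := hP.1
  have hQsym := hQ.1
  have hlmp : 0 < lamMin P := lamMin_pos hn hP
  have hlmP : 0 < lamMax P := lt_of_lt_of_le hlmp (lamMin_le_lamMax hn hPsym)
  have hlmQ : 0 < lamMin Q := lamMin_pos hn hQ
  have hF : 0 ≤ frobNorm (P * M) := frobNorm_nonneg _
  -- lamMin Q ≤ lamMax P
  have hQP : lamMin Q ≤ lamMax P := by
    set u : EuclideanSpace ℝ (Fin n) := EuclideanSpace.single ⟨0, hn⟩ (1 : ℝ) with hu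
    have hnu : ‖u‖ = 1 := by rw [hu, EuclideanSpace.norm_single]; norm_num
    have h1 : lamMin Q ≤ quadForm Q u := by
      have := lamMin_le_quadForm hQsym u; rwa [hnu, one_pow, mul_one] at this
    have h2 : quadForm Q u ≤ quadForm P u := by
      have h0 := quadForm_nonneg hLyap u
      rw [quadForm_sub, quadForm_sub] at h0
      have h3 : 0 ≤ quadForm (Mᵀ * P * M) u := by
        rw [quadForm_conj]
        exact quadForm_nonneg hP.posSemidef _
      linarith
    have h4 : quadForm P u ≤ lamMax P := by
      have := quadForm_le_lamMax hPsym u; rwa [hnu, one_pow, mul_one] at this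
    linarith
  set ρ : ℝ := 1 - lamMin Q / (2 * lamMax P) with hρ
  have hρ0 : 0 ≤ ρ := by
    rw [hρ]
    have h1 : lamMin Q / (2 * lamMax P) ≤ 1 := by
      rw [div_le_one (by linarith)]; linarith
    linarith
  set C : ℝ := lamMax P * phibar ^ 2 * nubar ^ 2 with hC
  have hC0 : 0 ≤ C := by
    rw [hC]; exact mul_nonneg (mul_nonneg hlmP.le (sq_nonneg phibar)) (sq_nonneg nubar)
  -- one-step Lyapunov inequality
  have hstep : ∀ t, quadForm P (e (t + 1)) ≤ ρ * quadForm P (e t) + C := by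
    intro t
    set εt := opNorm (p t - pstar) with hεt
    set nt := ‖e t‖ with hnt
    have hε0 : 0 ≤ εt := opNorm_nonneg' _
    have hnt0 : 0 ≤ nt := norm_nonneg _
    set a := mulVecE M (e t) with ha
    set d1 := mulVecE (p t - pstar)ᵀ (ψ (x t + e t)) with hd1def
    set d2 := mulVecE pstarᵀ (ψ (x t + e t) - ψ (x t)) with hd2def
    have hsplit : e (t + 1) = a + (d1 + d2) := by
      rw [hdyn t, ha, hd1def, hd2def, Matrix.transpose_sub, mulVecE_sub_mat, mulVecE_sub_vec_s1]
      abel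
    have hd1 : ‖d1‖ ≤ εt * phibar := by
      calc ‖d1‖ ≤ opNorm (p t - pstar) * ‖ψ (x t + e t)‖ := norm_mulVecE_transpose_le_op _ _
        _ ≤ εt * phibar := by
            rw [← hεt]; exact mul_le_mul_of_nonneg_left (hbdd _) hε0
    have hd2 : ‖d2‖ ≤ pbar * (Lphi * nt) := by
      have hl : ‖ψ (x t + e t) - ψ (x t)‖ ≤ Lphi * nt := by
        have := hlip (x t) (x t + e t)
        rwa [add_sub_cancel_left] at this
      calc ‖d2‖ ≤ opNorm pstar * ‖ψ (x t + e t) - ψ (x t)‖ := norm_mulVecE_transpose_le_op _ _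
        _ ≤ pbar * (Lphi * nt) := mul_le_mul hpstar hl (norm_nonneg _) hpbar.le
    set D : ℝ := phibar * εt + pbar * Lphi * nt with hD
    have hd : ‖d1 + d2‖ ≤ D := by
      have h0 := norm_add_le d1 d2
      rw [hD]; nlinarith [hd1, hd2]
    have hD0 : 0 ≤ D := le_trans (norm_nonneg _) hd
    have hexp : quadForm P (e (t + 1)) = quadForm (Mᵀ * P * M) (e t)
        + 2 * (inner ℝ (mulVecE (P * M) (e t)) (d1 + d2) : ℝ) + quadForm P (d1 + d2) := by
      rw [hsplit, quadForm_add_vec hPsym, ha, quadForm_conj, mulVecE_comp]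
    have hq1 : quadForm (Mᵀ * P * M) (e t) ≤ quadForm P (e t) - lamMin Q * nt ^ 2 := by
      have h0 := quadForm_nonneg hLyap (e t)
      rw [quadForm_sub, quadForm_sub] at h0
      have h1 := lamMin_le_quadForm hQsym (e t)
      rw [← hnt] at h1
      linarith
    have hq2 : (inner ℝ (mulVecE (P * M) (e t)) (d1 + d2) : ℝ) ≤ frobNorm (P * M) * nt * D := by
      calc (inner ℝ (mulVecE (P * M) (e t)) (d1 + d2) : ℝ)
          ≤ ‖mulVecE (P * M) (e t)‖ * ‖d1 + d2‖ := real_inner_le_norm _ _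
        _ ≤ (frobNorm (P * M) * nt) * D := by
            apply mul_le_mul _ hd (norm_nonneg _) (mul_nonneg hF hnt0)
            rw [hnt]; exact norm_mulVecE_le_frob _ _
        _ = frobNorm (P * M) * nt * D := by ring
    have hq3 : quadForm P (d1 + d2) ≤ lamMax P * D ^ 2 := by
      have h1 := quadForm_le_lamMax hPsym (d1 + d2)
      have h2 : ‖d1 + d2‖ ^ 2 ≤ D ^ 2 := by nlinarith [norm_nonneg (d1 + d2)]
      nlinarith [hlmP]
    set G : ℝ := lamMax P * Lphi * pbar + frobNorm (P * M) with hGdef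
    have hG : 0 < G := by rw [hGdef]; positivity
    have hκ : εt * nt ≤ (lamMin Q / (8 * phibar * G)) * nt ^ 2 := by
      have h1 := hcone t
      rw [← hεt, ← hnt] at h1
      calc εt * nt ≤ (lamMin Q / (8 * phibar * G) * nt) * nt :=
            mul_le_mul_of_nonneg_right h1 hnt0
        _ = lamMin Q / (8 * phibar * G) * nt ^ 2 := by ring
    have hcross : 2 * phibar * G * (εt * nt) ≤ (lamMin Q / 4) * nt ^ 2 := by
      have h1 : 2 * phibar * G * (εt * nt)
          ≤ 2 * phibar * G * ((lamMin Q / (8 * phibar * G)) * nt ^ 2) :=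
        mul_le_mul_of_nonneg_left hκ (by positivity)
      have h2 : 2 * phibar * G * ((lamMin Q / (8 * phibar * G)) * nt ^ 2)
          = (lamMin Q / 4) * nt ^ 2 := by
        field_simp
        ring
      linarith
    have hquad : (2 * frobNorm (P * M) * (pbar * Lphi) + lamMax P * (pbar * Lphi) ^ 2) * nt ^ 2
        ≤ (lamMin Q / 4) * nt ^ 2 := by
      apply mul_le_mul_of_nonneg_right _ (sq_nonneg nt)
      nlinarith [hgain]
    have hε2 : lamMax P * phibar ^ 2 * εt ^ 2 ≤ C := by
      rw [hC]
      have h1 : εt ^ 2 ≤ nubar ^ 2 := by nlinarith [hbound t, hε0]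
      exact mul_le_mul_of_nonneg_left h1 (by positivity)
    have hVub : quadForm P (e t) ≤ lamMax P * nt ^ 2 := by
      rw [hnt]; exact quadForm_le_lamMax hPsym (e t)
    have hρV : quadForm P (e t) - (lamMin Q / 2) * nt ^ 2 ≤ ρ * quadForm P (e t) := by
      rw [hρ]
      have h1 : lamMin Q / (2 * lamMax P) * quadForm P (e t)
          ≤ lamMin Q / (2 * lamMax P) * (lamMax P * nt ^ 2) :=
        mul_le_mul_of_nonneg_left hVub (by positivity)
      have h2 : lamMin Q / (2 * lamMax P) * (lamMax P * nt ^ 2) = (lamMin Q / 2) * nt ^ 2 := by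
        field_simp
      nlinarith [h1, h2]
    have expand : 2 * (frobNorm (P * M) * nt * D) + lamMax P * D ^ 2
        = 2 * phibar * G * (εt * nt)
          + (2 * frobNorm (P * M) * (pbar * Lphi) + lamMax P * (pbar * Lphi) ^ 2) * nt ^ 2
          + lamMax P * phibar ^ 2 * εt ^ 2 := by
      rw [hD, hGdef]; ring
    calc quadForm P (e (t + 1))
        ≤ quadForm P (e t) - lamMin Q * nt ^ 2
          + 2 * (frobNorm (P * M) * nt * D) + lamMax P * D ^ 2 := by
          rw [hexp]; linarith [hq1, hq2, hq3]
      _ ≤ quadForm P (e t) - (lamMin Q / 2) * nt ^ 2 + C := by linarith [expand, hcross, hquad, hε2]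
      _ ≤ ρ * quadForm P (e t) + C := by linarith [hρV]
  -- iterate
  set K : ℝ := C * (2 * lamMax P / lamMin Q) with hK
  have hK0 : 0 ≤ K := by
    rw [hK]; exact mul_nonneg hC0 (by positivity)
  have hfix : ρ * K + C = K := by
    rw [hρ, hK, hC]; field_simp; ring
  have hiter : ∀ t, quadForm P (e t) ≤ ρ ^ t * quadForm P (e 0) + K := by
    intro t
    induction t with
    | zero => simp only [pow_zero, one_mul]; linarith [hK0]
    | succ t ih =>
      calc quadForm P (e (t + 1)) ≤ ρ * quadForm P (e t) + C := hstep t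
        _ ≤ ρ * (ρ ^ t * quadForm P (e 0) + K) + C := by
            have := mul_le_mul_of_nonneg_left ih hρ0
            linarith
        _ = ρ ^ (t + 1) * quadForm P (e 0) + (ρ * K + C) := by ring
        _ = ρ ^ (t + 1) * quadForm P (e 0) + K := by rw [hfix]
  -- conclude
  intro t
  have hV := hiter t
  have hlow : lamMin P * ‖e t‖ ^ 2 ≤ quadForm P (e t) := lamMin_le_quadForm hPsym (e t)
  have hup0 : quadForm P (e 0) ≤ lamMax P * ‖e 0‖ ^ 2 := quadForm_le_lamMax hPsym (e 0)
  have hρt : 0 ≤ ρ ^ t := pow_nonneg hρ0 t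
  set A : ℝ := (lamMax P / lamMin P) * (ρ ^ t * ‖e 0‖ ^ 2) with hA
  set B : ℝ := K / lamMin P with hB
  have hA0 : 0 ≤ A := by
    rw [hA]; positivity
  have hB0 : 0 ≤ B := by rw [hB]; positivity
  have hsq : ‖e t‖ ^ 2 ≤ A + B := by
    have h1 : lamMin P * ‖e t‖ ^ 2 ≤ ρ ^ t * (lamMax P * ‖e 0‖ ^ 2) + K := by
      nlinarith [hV, hlow, hup0, hρt]
    have h2 : A + B = (ρ ^ t * (lamMax P * ‖e 0‖ ^ 2) + K) / lamMin P := by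
      rw [hA, hB]; field_simp
    rw [h2, le_div_iff₀ hlmp]
    linarith
  have hnorm : ‖e t‖ ≤ Real.sqrt A + Real.sqrt B := by
    calc ‖e t‖ = Real.sqrt (‖e t‖ ^ 2) := (Real.sqrt_sq (norm_nonneg _)).symm
      _ ≤ Real.sqrt (A + B) := Real.sqrt_le_sqrt hsq
      _ ≤ Real.sqrt A + Real.sqrt B := sqrt_add_le' A B hA0 hB0
  have hsqrtA : Real.sqrt A = Real.sqrt (lamMax P / lamMin P) * ρ ^ ((t : ℝ) / 2) * ‖e 0‖ := by
    have hrt : (ρ : ℝ) ^ ((t : ℝ) / 2) = Real.sqrt (ρ ^ t) := by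
      rw [Real.sqrt_eq_rpow, ← Real.rpow_natCast ρ t, ← Real.rpow_mul hρ0]
      congr 1
      ring
    rw [hA, Real.sqrt_mul (by positivity), Real.sqrt_mul hρt, Real.sqrt_sq (norm_nonneg _), hrt]
    ring
  have hsqrtB : Real.sqrt B
      = phibar * nubar * Real.sqrt (2 * lamMax P ^ 2 / (lamMin Q * lamMin P)) := by
    have h1 : B = (phibar * nubar) ^ 2 * (2 * lamMax P ^ 2 / (lamMin Q * lamMin P)) := by
      rw [hB, hK, hC]; field_simp
    rw [h1, Real.sqrt_mul (sq_nonneg _), Real.sqrt_sq (by positivity)]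
  rw [hsqrtA, hsqrtB] at hnorm
  exact hnorm
end

section
/- Let a, b, c, d be positive reals with c ≤ b, let α ≥ 1, let φ : ℝⁿ × ℝᵏ → ℝⁿ, and let V : ℝⁿ → ℝ satisfy a‖ξ‖^α ≤ V(ξ) ≤ b‖ξ‖^α for all ξ ∈ ℝⁿ and V(φ(ξ, ν)) − V(ξ) ≤ −c‖ξ‖^α + d‖ν‖^α for all ξ ∈ ℝⁿ, ν ∈ ℝᵏ. Then for any sequences ξ : ℕ → ℝⁿ and ν : ℕ → ℝᵏ with ξ_{t+1} = φ(ξ_t, ν_t) for all t and ‖ν_t‖ ≤ ν̄ for all t, one has for every t ∈ ℕ: ‖ξ_t‖ ≤ (b/a)^{1/α}·(1 − c/b)^{t/α}·‖ξ₀‖ + (d·b/(a·c))^{1/α}·ν̄. -/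
open Matrix MeasureTheory Filter

lemma my_rpow_add_le (x y p : ℝ) (hx : 0 ≤ x) (hy : 0 ≤ y) (hp : 0 ≤ p) (hp1 : p ≤ 1) :
    (x + y) ^ p ≤ x ^ p + y ^ p := by
  have h := NNReal.rpow_add_le_add_rpow ⟨x, hx⟩ ⟨y, hy⟩ hp hp1
  have := (NNReal.coe_le_coe).2 h
  push_cast [NNReal.coe_rpow] at this
  exact Real.rpow_add_le_add_rpow hx hy hp hp1


/-- Explicit version of Lemma 1: an ISS Lyapunov function with power-law comparison
functions implies input-to-state stability with exponential transient and linear gain. -/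
theorem stmt_3 {n k : ℕ}
    (a b c d α : ℝ) (ha : 0 < a) (hb : 0 < b) (hc : 0 < c) (hd : 0 < d)
    (hcb : c ≤ b) (hα : 1 ≤ α)
    (φ : EuclideanSpace ℝ (Fin n) × EuclideanSpace ℝ (Fin k) → EuclideanSpace ℝ (Fin n))
    (V : EuclideanSpace ℝ (Fin n) → ℝ)
    (hsandwich : ∀ ξ, a * ‖ξ‖ ^ α ≤ V ξ ∧ V ξ ≤ b * ‖ξ‖ ^ α)
    (hdecrease : ∀ ξ ν, V (φ (ξ, ν)) - V ξ ≤ -c * ‖ξ‖ ^ α + d * ‖ν‖ ^ α) :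
    ∀ (ξ : ℕ → EuclideanSpace ℝ (Fin n)) (ν : ℕ → EuclideanSpace ℝ (Fin k)) (nubar : ℝ),
      (∀ t, ξ (t + 1) = φ (ξ t, ν t)) → (∀ t, ‖ν t‖ ≤ nubar) →
      ∀ t : ℕ, ‖ξ t‖ ≤
        (b / a) ^ (1 / α) * (1 - c / b) ^ ((t : ℝ) / α) * ‖ξ 0‖
          + (d * b / (a * c)) ^ (1 / α) * nubar := by
  intro ξ ν nubar hrec hν t
  have hα0 : 0 < α := lt_of_lt_of_le one_pos hα
  have hnubar : 0 ≤ nubar := le_trans (norm_nonneg _) (hν 0)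
  set lam : ℝ := 1 - c / b with hlam
  have hlam0 : 0 ≤ lam := by
    have h : c / b ≤ 1 := (div_le_one hb).2 hcb
    rw [hlam]; linarith
  have hstep : ∀ s, V (ξ (s + 1)) ≤ lam * V (ξ s) + d * nubar ^ α := by
    intro s
    have h1 := hdecrease (ξ s) (ν s)
    rw [← hrec s] at h1
    have h2 : c / b * V (ξ s) ≤ c * ‖ξ s‖ ^ α := by
      have hVb := (hsandwich (ξ s)).2
      calc c / b * V (ξ s) ≤ c / b * (b * ‖ξ s‖ ^ α) :=
            mul_le_mul_of_nonneg_left hVb (by positivity)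
        _ = c * ‖ξ s‖ ^ α := by field_simp
    have h3 : d * ‖ν s‖ ^ α ≤ d * nubar ^ α :=
      mul_le_mul_of_nonneg_left
        (Real.rpow_le_rpow (norm_nonneg _) (hν s) hα0.le) hd.le
    calc V (ξ (s + 1)) ≤ V (ξ s) - c / b * V (ξ s) + d * nubar ^ α := by linarith
      _ = lam * V (ξ s) + d * nubar ^ α := by rw [hlam]; ring
  have hV0 : 0 ≤ V (ξ 0) := le_trans (by positivity) (hsandwich (ξ 0)).1
  have hdn : 0 ≤ d * nubar ^ α := by positivity
  have hind : ∀ s : ℕ, V (ξ s) ≤ lam ^ s * V (ξ 0) + b / c * (d * nubar ^ α) := by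
    intro s
    induction s with
    | zero =>
      have : 0 ≤ b / c * (d * nubar ^ α) := by positivity
      simp only [pow_zero, one_mul]; linarith
    | succ m ih =>
      have hl1 : lam * (b / c) + 1 ≤ b / c := by
        rw [hlam]; field_simp; linarith
      calc V (ξ (m + 1)) ≤ lam * V (ξ m) + d * nubar ^ α := hstep m
        _ ≤ lam * (lam ^ m * V (ξ 0) + b / c * (d * nubar ^ α)) + d * nubar ^ α := by
            nlinarith [mul_le_mul_of_nonneg_left ih hlam0]
        _ = lam ^ (m + 1) * V (ξ 0) + (lam * (b / c) + 1) * (d * nubar ^ α) := by ring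
        _ ≤ lam ^ (m + 1) * V (ξ 0) + b / c * (d * nubar ^ α) := by
            nlinarith [mul_le_mul_of_nonneg_right hl1 hdn]
  have hkey : ‖ξ t‖ ^ α ≤ b / a * lam ^ t * ‖ξ 0‖ ^ α + d * b / (a * c) * nubar ^ α := by
    have h1 := (hsandwich (ξ t)).1
    have h2 := (hsandwich (ξ 0)).2
    have h3 := hind t
    have hmul : lam ^ t * V (ξ 0) ≤ lam ^ t * (b * ‖ξ 0‖ ^ α) :=
      mul_le_mul_of_nonneg_left h2 (pow_nonneg hlam0 t)
    have hbig : a * ‖ξ t‖ ^ α ≤ lam ^ t * (b * ‖ξ 0‖ ^ α) + b / c * (d * nubar ^ α) := by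
      linarith
    have heq : a * (b / a * lam ^ t * ‖ξ 0‖ ^ α + d * b / (a * c) * nubar ^ α)
        = lam ^ t * (b * ‖ξ 0‖ ^ α) + b / c * (d * nubar ^ α) := by
      field_simp
    exact le_of_mul_le_mul_left (by rw [heq]; exact hbig) ha
  -- take α-th roots
  have hX : 0 ≤ b / a * lam ^ t * ‖ξ 0‖ ^ α := by positivity
  have hY : 0 ≤ d * b / (a * c) * nubar ^ α := by positivity
  have hinv0 : 0 ≤ 1 / α := by positivity
  have hinv1 : 1 / α ≤ 1 := by
    rw [div_le_one hα0]; exact hα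
  have hroot : (‖ξ t‖ ^ α) ^ (1 / α)
      ≤ (b / a * lam ^ t * ‖ξ 0‖ ^ α) ^ (1 / α)
        + (d * b / (a * c) * nubar ^ α) ^ (1 / α) :=
    le_trans (Real.rpow_le_rpow (by positivity) hkey hinv0)
      (my_rpow_add_le _ _ _ hX hY hinv0 hinv1)
  have e0 : (‖ξ t‖ ^ α) ^ (1 / α) = ‖ξ t‖ := by
    rw [one_div, Real.rpow_rpow_inv (norm_nonneg _) hα0.ne']
  have e1 : (b / a * lam ^ t * ‖ξ 0‖ ^ α) ^ (1 / α)
      = (b / a) ^ (1 / α) * lam ^ ((t : ℝ) / α) * ‖ξ 0‖ := by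
    rw [Real.mul_rpow (by positivity) (by positivity),
        Real.mul_rpow (by positivity) (pow_nonneg hlam0 t)]
    rw [← Real.rpow_natCast lam t, ← Real.rpow_mul hlam0, mul_one_div]
    rw [one_div α, Real.rpow_rpow_inv (norm_nonneg _) hα0.ne']
  have e2 : (d * b / (a * c) * nubar ^ α) ^ (1 / α)
      = (d * b / (a * c)) ^ (1 / α) * nubar := by
    rw [Real.mul_rpow (by positivity) (by positivity),
        one_div α, Real.rpow_rpow_inv hnubar hα0.ne']
  rw [e0, e1, e2] at hroot
  exact hroot
end

section
/- Let A ∈ ℝ^{n×n}, C ∈ ℝ^{p×n}, K ∈ ℝ^{n×p}, let P, Q ∈ ℝ^{n×n} be symmetric with P positive definite, and let p̄⋆ > 0, Lφ > 0, κ₁ > 0, κ₂ > 0, κ₃ > 0 be scalars such that: (i) (PA + KC)ᵀP⁻¹(PA + KC) − P + Q ⪯ 0; (ii) Q ⪰ κ₁·I; (iii) P ⪯ κ₂·I; (iv) ‖PA + KC‖_F ≤ κ₃; and (v) 4·Lφ²·p̄⋆²·κ₂ + 8·p̄⋆·Lφ·κ₃ ≤ κ₁. Then, setting L₀ := P⁻¹K,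 the matrices satisfy (A + L₀C)ᵀP(A + L₀C) − P ⪯ −Q and 4·p̄⋆²·Lφ²·λmax(P) + 8·p̄⋆·Lφ·‖P(A + L₀C)‖_F ≤ λmin(Q). -/
open Matrix MeasureTheory Filter

open Matrix

lemma spec_mem_eig {n : ℕ} {S : Matrix (Fin n) (Fin n) ℝ} {μ : ℝ}
    (hμ : μ ∈ spectrum ℝ S) : ∃ x : Fin n → ℝ, x ≠ 0 ∧ S *ᵥ x = μ • x := by
  rw [spectrum.mem_iff] at hμ
  rw [Matrix.isUnit_iff_isUnit_det, isUnit_iff_ne_zero, not_ne_iff] at hμ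
  obtain ⟨x, hx0, hx⟩ := Matrix.exists_mulVec_eq_zero_iff.2 hμ
  refine ⟨x, hx0, ?_⟩
  have : (algebraMap ℝ (Matrix (Fin n) (Fin n) ℝ)) μ = μ • 1 := by
    rw [Algebra.algebraMap_eq_smul_one]
  rw [this, sub_mulVec, smul_mulVec, one_mulVec, sub_eq_zero] at hx
  exact hx.symm

lemma spec_le {n : ℕ} {S : Matrix (Fin n) (Fin n) ℝ} {c : ℝ}
    (h : (S - c • (1:Matrix (Fin n) (Fin n) ℝ)).PosSemidef) :
    ∀ μ ∈ spectrum ℝ S, c ≤ μ := by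
  intro μ hμ
  obtain ⟨x, hx0, hx⟩ := spec_mem_eig hμ
  have h2 := h.dotProduct_mulVec_nonneg x
  rw [sub_mulVec, smul_mulVec, one_mulVec, hx, dotProduct_sub,
    dotProduct_smul, dotProduct_smul] at h2
  have hpos : 0 < star x ⬝ᵥ x := by
    simpa using Matrix.dotProduct_self_star_pos_iff.2 hx0
  simp only [smul_eq_mul] at h2
  nlinarith [h2, hpos]

lemma spec_ge {n : ℕ} {S : Matrix (Fin n) (Fin n) ℝ} {c : ℝ}
    (h : (c • (1:Matrix (Fin n) (Fin n) ℝ) - S).PosSemidef) :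
    ∀ μ ∈ spectrum ℝ S, μ ≤ c := by
  intro μ hμ
  obtain ⟨x, hx0, hx⟩ := spec_mem_eig hμ
  have h2 := h.dotProduct_mulVec_nonneg x
  rw [sub_mulVec, smul_mulVec, one_mulVec, hx, dotProduct_sub,
    dotProduct_smul, dotProduct_smul] at h2
  have hpos : 0 < star x ⬝ᵥ x := by
    simpa using Matrix.dotProduct_self_star_pos_iff.2 hx0
  simp only [smul_eq_mul] at h2
  nlinarith [h2, hpos]



/-- Theorem 2 of the paper: feasibility of the SDP conditions implies the hypotheses of
Theorem 1 for the gain L₀ = P⁻¹K. -/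
theorem stmt_4 {n p : ℕ}
    (A : Matrix (Fin n) (Fin n) ℝ) (C : Matrix (Fin p) (Fin n) ℝ)
    (K : Matrix (Fin n) (Fin p) ℝ)
    (P Q : Matrix (Fin n) (Fin n) ℝ) (hP : P.PosDef) (hQ : Q.IsHermitian)
    (pbar Lphi κ₁ κ₂ κ₃ : ℝ)
    (hpbar : 0 < pbar) (hLphi : 0 < Lphi)
    (hκ₁ : 0 < κ₁) (hκ₂ : 0 < κ₂) (hκ₃ : 0 < κ₃)
    (hi : (P - Q - (P * A + K * C)ᵀ * P⁻¹ * (P * A + K * C)).PosSemidef)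
    (hii : (Q - κ₁ • (1 : Matrix (Fin n) (Fin n) ℝ)).PosSemidef)
    (hiii : (κ₂ • (1 : Matrix (Fin n) (Fin n) ℝ) - P).PosSemidef)
    (hiv : frobNorm (P * A + K * C) ≤ κ₃)
    (hv : 4 * Lphi ^ 2 * pbar ^ 2 * κ₂ + 8 * pbar * Lphi * κ₃ ≤ κ₁) :
    (P - (A + (P⁻¹ * K) * C)ᵀ * P * (A + (P⁻¹ * K) * C) - Q).PosSemidef ∧
      4 * pbar ^ 2 * Lphi ^ 2 * lamMax P
        + 8 * pbar * Lphi * frobNorm (P * (A + (P⁻¹ * K) * C)) ≤ lamMin Q := by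
  
  simp only [lamMax, lamMin, frobNorm] at *
  have hPt : Pᵀ = P := by
    rw [← Matrix.conjTranspose_eq_transpose_of_trivial]; exact hP.1.eq
  have hu : IsUnit P.det := isUnit_iff_ne_zero.2 hP.det_pos.ne'
  have h1 : P * P⁻¹ = 1 := Matrix.mul_nonsing_inv P hu
  set L : Matrix (Fin n) (Fin n) ℝ := A + (P⁻¹ * K) * C with hL
  have hPL : P * L = P * A + K * C := by
    rw [hL, Matrix.mul_add, ← Matrix.mul_assoc, ← Matrix.mul_assoc, h1, Matrix.one_mul]
  have key : Lᵀ * P * L = (P * A + K * C)ᵀ * P⁻¹ * (P * A + K * C) := by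
    rw [← hPL, Matrix.transpose_mul, hPt]
    rw [Matrix.mul_assoc Lᵀ P, Matrix.mul_assoc Lᵀ, h1, Matrix.mul_one]
  have part1 : (P - Lᵀ * P * L - Q).PosSemidef := by
    have e1 : P - Lᵀ * P * L - Q = P - Q - (P * A + K * C)ᵀ * P⁻¹ * (P * A + K * C) := by
      rw [key, sub_right_comm]
    rw [e1]; exact hi
  refine ⟨part1, ?_⟩
  have hfrob : Real.sqrt (∑ i, ∑ j, ((P * L) i j) ^ 2) ≤ κ₃ := by rw [hPL]; exact hiv
  have hfrob0 : 0 ≤ Real.sqrt (∑ i, ∑ j, ((P * L) i j) ^ 2) := Real.sqrt_nonneg _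
  rcases Nat.eq_zero_or_pos n with hn | hn
  · subst hn
    have hspecP : spectrum ℝ P = ∅ := by
      ext μ; simp [spectrum.mem_iff, isUnit_of_subsingleton]
    have hspecQ : spectrum ℝ Q = ∅ := by
      ext μ; simp [spectrum.mem_iff, isUnit_of_subsingleton]
    simp [hspecP, hspecQ, Real.sSup_empty, Real.sInf_empty]
  · have hmaxP : sSup (spectrum ℝ P) ≤ κ₂ := Real.sSup_le (spec_ge hiii) hκ₂.le
    have hne : (spectrum ℝ Q).Nonempty :=
      ⟨_, hQ.eigenvalues_mem_spectrum_real ⟨0, hn⟩⟩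
    have hminQ : κ₁ ≤ sInf (spectrum ℝ Q) := le_csInf hne (spec_le hii)
    nlinarith [sq_nonneg pbar, sq_nonneg Lphi, mul_pos hpbar hLphi,
      mul_le_mul_of_nonneg_left hfrob (by positivity : (0:ℝ) ≤ 8 * pbar * Lphi),
      mul_le_mul_of_nonneg_left hmaxP
        (by positivity : (0:ℝ) ≤ 4 * pbar ^ 2 * Lphi ^ 2)]
end

section
/- Let P, Q ∈ ℝ^{n×n} be symmetric with P positive definite, let A ∈ ℝ^{n×n}, C ∈ ℝ^{p×n}, K ∈ ℝ^{n×p}, Cq ∈ ℝ^{q×n}, Bφ ∈ ℝ^{n×r}, and let L̂φ ∈ ℝ. Set R := PA + KC and L := P⁻¹K. If the symmetric block matrix [[−P + Q, Rᵀ, Rᵀ, L̂φ·Cqᵀ], [R, −P, 0, 0], [R, 0, BφᵀP Bφ − I, 0], [L̂φ·Cq, 0, 0, −I]] is negative semidefinite, then the block matrix [[Ω, Rᵀ], [R, BφᵀP Bφ − I]] is negative semidefinite, where Ω := (A + LC)ᵀP(A + LC) − P + Q + L̂φ²·CqᵀCq. -/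
open Matrix MeasureTheory Filter

/-- Successive Schur complement computation in the proof of Theorem 3: the 4×4 block LMI
implies the reduced 2×2 block LMI with Ω = (A+LC)ᵀP(A+LC) − P + Q + L̂φ²·CqᵀCq.
(The block structure forces the column dimension r of Bφ to equal n.)
A symmetric matrix S is negative semidefinite iff (-S) is positive semidefinite. -/
theorem stmt_7 {n p q : ℕ}
    (P Q : Matrix (Fin n) (Fin n) ℝ) (hP : P.PosDef) (hQ : Q.IsHermitian)
    (A : Matrix (Fin n) (Fin n) ℝ) (C : Matrix (Fin p) (Fin n) ℝ)
    (K : Matrix (Fin n) (Fin p) ℝ) (Cq : Matrix (Fin q) (Fin n) ℝ)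
    (Bphi : Matrix (Fin n) (Fin n) ℝ) (Lhat : ℝ)
    (R : Matrix (Fin n) (Fin n) ℝ) (hR : R = P * A + K * C)
    (L : Matrix (Fin n) (Fin p) ℝ) (hL : L = P⁻¹ * K)
    (hbig : (-(Matrix.fromBlocks
        (Matrix.fromBlocks (-P + Q) Rᵀ R (-P))
        (Matrix.fromBlocks Rᵀ (Lhat • Cqᵀ) 0 0)
        (Matrix.fromBlocks R 0 (Lhat • Cq) 0)
        (Matrix.fromBlocks (Bphiᵀ * P * Bphi - 1) 0 0 (-1)))).PosSemidef) :
    (-(Matrix.fromBlocks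
        ((A + L * C)ᵀ * P * (A + L * C) - P + Q + Lhat ^ 2 • (Cqᵀ * Cq))
        Rᵀ R (Bphiᵀ * P * Bphi - 1))).PosSemidef := by
  classical
  have hdet : IsUnit P.det := isUnit_iff_ne_zero.mpr (ne_of_gt hP.det_pos)
  have hPP : P * P⁻¹ = 1 := Matrix.mul_nonsing_inv P hdet
  have hiP : P⁻¹ * P = 1 := Matrix.nonsing_inv_mul P hdet
  have hPt : Pᵀ = P := hP.1
  set M : Matrix (Fin n) (Fin n) ℝ := A + L * C with hM
  have hPL : P * (P⁻¹ * K) = K := by rw [← Matrix.mul_assoc, hPP, Matrix.one_mul]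
  have hRM : R = P * M := by
    rw [hR, hM, hL, Matrix.mul_add, ← Matrix.mul_assoc P (P⁻¹ * K) C, hPL]
  set Etop : Matrix (Fin n ⊕ Fin n) (Fin n ⊕ Fin n) ℝ :=
    Matrix.fromBlocks 1 0 (P⁻¹ * R) 0 with hEtop
  set Ebot : Matrix (Fin n ⊕ Fin q) (Fin n ⊕ Fin n) ℝ :=
    Matrix.fromBlocks 0 1 (Lhat • Cq) 0 with hEbot
  set E : Matrix ((Fin n ⊕ Fin n) ⊕ (Fin n ⊕ Fin q)) (Fin n ⊕ Fin n) ℝ :=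
    Matrix.fromRows Etop Ebot with hE
  set S : Matrix ((Fin n ⊕ Fin n) ⊕ (Fin n ⊕ Fin q)) ((Fin n ⊕ Fin n) ⊕ (Fin n ⊕ Fin q)) ℝ :=
    Matrix.fromBlocks
        (Matrix.fromBlocks (-P + Q) Rᵀ R (-P))
        (Matrix.fromBlocks Rᵀ (Lhat • Cqᵀ) 0 0)
        (Matrix.fromBlocks R 0 (Lhat • Cq) 0)
        (Matrix.fromBlocks (Bphiᵀ * P * Bphi - 1) 0 0 (-1)) with hS
  have hcong : (Eᴴ * (-S) * E).PosSemidef := hbig.conjTranspose_mul_mul_same E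
  have hEH : Eᴴ = Eᵀ := by
    ext i j; simp [Matrix.conjTranspose_apply]
  have hPPR : P * (P⁻¹ * R) = R := by rw [← Matrix.mul_assoc, hPP, Matrix.one_mul]
  have hiPR : P⁻¹ * (P * M) = M := by rw [← Matrix.mul_assoc, hiP, Matrix.one_mul]
  have hRPR : Rᵀ * (P⁻¹ * R) = Mᵀ * P * M := by
    rw [hRM, Matrix.transpose_mul, hiPR, hPt]
  have hCq2 : (Lhat • Cqᵀ) * (Lhat • Cq) = Lhat ^ 2 • (Cqᵀ * Cq) := by
    rw [Matrix.smul_mul, Matrix.mul_smul, smul_smul, sq]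
  set X : Matrix (Fin n) (Fin n) ℝ :=
    -P + Q + Rᵀ * (P⁻¹ * R) + (Lhat • Cqᵀ) * (Lhat • Cq) with hX
  have t1 : (Matrix.fromBlocks (-P + Q) Rᵀ R (-P)) * Etop =
      Matrix.fromBlocks (-P + Q + Rᵀ * (P⁻¹ * R)) 0 0 0 := by
    rw [hEtop, Matrix.fromBlocks_multiply]
    congr 1 <;> simp [Matrix.neg_mul, hPPR]
  have t2 : ((Matrix.fromBlocks Rᵀ (Lhat • Cqᵀ) 0 0 :
      Matrix (Fin n ⊕ Fin n) (Fin n ⊕ Fin q) ℝ)) * Ebot =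
      Matrix.fromBlocks ((Lhat • Cqᵀ) * (Lhat • Cq)) Rᵀ 0 0 := by
    rw [hEbot, Matrix.fromBlocks_multiply]
    congr 1 <;> simp
  have t3 : ((Matrix.fromBlocks R 0 (Lhat • Cq) 0 :
      Matrix (Fin n ⊕ Fin q) (Fin n ⊕ Fin n) ℝ)) * Etop =
      Matrix.fromBlocks R 0 (Lhat • Cq) 0 := by
    rw [hEtop, Matrix.fromBlocks_multiply]
    congr 1 <;> simp
  have t4 : ((Matrix.fromBlocks (Bphiᵀ * P * Bphi - 1) 0 0 (-1) :
      Matrix (Fin n ⊕ Fin q) (Fin n ⊕ Fin q) ℝ)) * Ebot =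
      Matrix.fromBlocks 0 (Bphiᵀ * P * Bphi - 1) (-(Lhat • Cq)) 0 := by
    rw [hEbot, Matrix.fromBlocks_multiply]
    congr 1 <;> simp
  have h1 : S * E = Matrix.fromRows (Matrix.fromBlocks X Rᵀ 0 0)
      (Matrix.fromBlocks R (Bphiᵀ * P * Bphi - 1) 0 0) := by
    rw [hS, hE, Matrix.fromBlocks_mul_fromRows, t1, t2, t3, t4,
      Matrix.fromBlocks_add, Matrix.fromBlocks_add]
    congr 1 <;> simp [hX]
  have t5 : Etopᵀ * Matrix.fromBlocks X Rᵀ 0 0 = Matrix.fromBlocks X Rᵀ 0 0 := by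
    rw [hEtop, Matrix.fromBlocks_transpose, Matrix.fromBlocks_multiply]
    congr 1 <;> simp
  have t6 : Ebotᵀ * (Matrix.fromBlocks R (Bphiᵀ * P * Bphi - 1) 0 0 :
      Matrix (Fin n ⊕ Fin q) (Fin n ⊕ Fin n) ℝ) =
      Matrix.fromBlocks 0 0 R (Bphiᵀ * P * Bphi - 1) := by
    rw [hEbot, Matrix.fromBlocks_transpose, Matrix.fromBlocks_multiply]
    congr 1 <;> simp
  have key : Eᵀ * S * E =
      Matrix.fromBlocks (Mᵀ * P * M - P + Q + Lhat ^ 2 • (Cqᵀ * Cq))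
        Rᵀ R (Bphiᵀ * P * Bphi - 1) := by
    rw [Matrix.mul_assoc, h1, hE, Matrix.transpose_fromRows,
      Matrix.fromCols_mul_fromRows, t5, t6, Matrix.fromBlocks_add]
    congr 1 <;> simp [hX, hRPR, hCq2] <;> abel
  rw [hEH, Matrix.mul_neg, Matrix.neg_mul, key] at hcong
  exact hcong
end
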